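/- Restrict the T²-action to the unit sphere S⁵ = {(z₁,z₂,z₃) ∈ ℂ³ : |z₁|² + |z₂|² + |z₃|² = 1}. Then the orbit space S⁵/T², endowed with the quotient topology, is homeomorphic to the 3-sphere S³. -/

import Mathlib

/-- The action of `(θ, φ) ∈ T²` on `ℂ³`,
`(e^{iθ}, e^{iφ})·(z₁,z₂,z₃) = (e^{iθ}z₁, e^{iφ}z₂, e^{−i(θ+φ)}z₃)`. -/
noncomputable def torusAct (θ φ : ℝ) (z : ℂ × ℂ × ℂ) : ℂ × ℂ × ℂ :=
  (Complex.exp (θ * Complex.I) * z.1,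
   Complex.exp (φ * Complex.I) * z.2.1,
   Complex.exp (-(θ + φ) * Complex.I) * z.2.2)

/-- The orbit equivalence relation of the `T²`-action on `ℂ³`. -/
noncomputable def torusSetoid : Setoid (ℂ × ℂ × ℂ) where
  r z w := ∃ θ φ : ℝ, w = torusAct θ φ z
  iseqv := by
    constructor
    · exact fun z => ⟨0, 0, by simp [torusAct]⟩
    · rintro z w ⟨θ, φ, rfl⟩
      refine ⟨-θ, -φ, ?_⟩
      refine Prod.ext ?_ (Prod.ext ?_ ?_) <;>
        · simp only [torusAct, ← mul_assoc, ← Complex.exp_add]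
          push_cast
          ring_nf
          simp
    · rintro z w v ⟨θ, φ, rfl⟩ ⟨θ', φ', rfl⟩
      refine ⟨θ + θ', φ + φ', ?_⟩
      refine Prod.ext ?_ (Prod.ext ?_ ?_) <;>
        · simp only [torusAct, ← mul_assoc, ← Complex.exp_add]
          push_cast
          ring_nf

/-- The unit 5-sphere `S⁵ ⊆ ℂ³`. -/
def sphere5 : Set (ℂ × ℂ × ℂ) :=
  {z | ‖z.1‖ ^ 2 + ‖z.2.1‖ ^ 2 + ‖z.2.2‖ ^ 2 = 1}

/-- The `T²`-orbit equivalence relation restricted to `S⁵`. -/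
noncomputable def sphere5Setoid : Setoid sphere5 :=
  Setoid.comap Subtype.val torusSetoid


noncomputable def invMap (z : ℂ × ℂ × ℂ) : EuclideanSpace ℝ (Fin 4) := WithLp.toLp 2 (fun i : Fin 4 =>
  match i with
  | 0 => ‖z.1‖ ^ 2 - 1/3
  | 1 => ‖z.2.1‖ ^ 2 - 1/3
  | 2 => (z.1 * z.2.1 * z.2.2).re
  | 3 => (z.1 * z.2.1 * z.2.2).im)

theorem invMap_continuous : Continuous invMap := by
  have c1 : Continuous fun z : ℂ × ℂ × ℂ => z.1 := continuous_fst
  have c2 : Continuous fun z : ℂ × ℂ × ℂ => z.2.1 := continuous_fst.comp continuous_snd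
  have c3 : Continuous fun z : ℂ × ℂ × ℂ => z.2.2 := continuous_snd.comp continuous_snd
  have cp : Continuous fun z : ℂ × ℂ × ℂ => z.1 * z.2.1 * z.2.2 := (c1.mul c2).mul c3
  have : Continuous (fun z : ℂ × ℂ × ℂ => (invMap z : Fin 4 → ℝ)) := by
    apply continuous_pi
    intro i
    fin_cases i
    · exact ((continuous_norm.comp c1).pow 2).sub continuous_const
    · exact ((continuous_norm.comp c2).pow 2).sub continuous_const
    · exact Complex.continuous_re.comp cp
    · exact Complex.continuous_im.comp cp
  exact (PiLp.continuous_toLp (p := 2) (β := fun _ : Fin 4 => ℝ)).comp this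


def onX (x : EuclideanSpace ℝ (Fin 4)) : Prop :=
  0 ≤ x 0 + 1/3 ∧ 0 ≤ x 1 + 1/3 ∧ 0 ≤ 1/3 - x 0 - x 1 ∧
    x 2 ^ 2 + x 3 ^ 2 = (x 0 + 1/3) * ((x 1 + 1/3) * (1/3 - x 0 - x 1))

theorem key_strict (a b c s : ℝ) (ha : 0 ≤ a) (hb : 0 ≤ b) (hc : 0 ≤ c)
    (habc : a + b + c = 1) (hs0 : 0 ≤ s) (hs1 : s < 1) :
    s ^ 2 * (a * b * c) < ((1-s)/3 + s*a) * (((1-s)/3 + s*b) * ((1-s)/3 + s*c)) := by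
  have he2 : 3 * (a*b*c) ≤ a*b + b*c + c*a := by
    nlinarith [mul_nonneg (mul_nonneg ha hb) hc, mul_nonneg ha (mul_nonneg hb hb),
      mul_nonneg hb (mul_nonneg hc hc), mul_nonneg hc (mul_nonneg ha ha),
      mul_nonneg ha (mul_nonneg hc hc), mul_nonneg hb (mul_nonneg ha ha),
      mul_nonneg hc (mul_nonneg hb hb)]
  have hu : 0 < (1-s)/3 := by linarith
  nlinarith [mul_pos hu (mul_pos hu hu), mul_pos (mul_pos hu hu) (mul_pos hu hu),
    mul_nonneg (mul_nonneg hu.le (mul_nonneg hs0 hs0)) (by linarith : 0 ≤ a*b + b*c + c*a - 3*(a*b*c)),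
    mul_pos (mul_pos hu hu) hu, mul_nonneg hs0 hu.le]

theorem onX_not_smul {x : EuclideanSpace ℝ (Fin 4)} (hx : onX x) {s : ℝ}
    (hs0 : 0 ≤ s) (hs1 : s < 1) : ¬ onX (s • x) := by
  obtain ⟨h1, h2, h3, h4⟩ := hx
  rintro ⟨g1, g2, g3, g4⟩
  have e0 : (s • x) 0 = s * x 0 := rfl
  have e1 : (s • x) 1 = s * x 1 := rfl
  have e2 : (s • x) 2 = s * x 2 := rfl
  have e3 : (s • x) 3 = s * x 3 := rfl
  rw [e0, e1, e2, e3] at g4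
  set a := x 0 + 1/3
  set b := x 1 + 1/3
  set c := 1/3 - x 0 - x 1
  have habc : a + b + c = 1 := by simp [a, b, c]; ring
  have hkey := key_strict a b c s h1 h2 h3 habc hs0 hs1
  have ea : s * x 0 + 1/3 = (1-s)/3 + s*a := by simp [a]; ring
  have eb : s * x 1 + 1/3 = (1-s)/3 + s*b := by simp [b]; ring
  have ec : 1/3 - s * x 0 - s * x 1 = (1-s)/3 + s*c := by simp [c]; ring
  rw [ea, eb, ec] at g4
  have : (s*x 2)^2 + (s*x 3)^2 = s^2 * (x 2^2 + x 3^2) := by ring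
  rw [this, h4] at g4
  nlinarith [g4, hkey]

theorem onX_scale_eq {x y : EuclideanSpace ℝ (Fin 4)} (hx : onX x) (hy : onX y)
    {t : ℝ} (ht : 0 < t) (hxy : y = t • x) : y = x := by
  rcases lt_trichotomy t 1 with h | h | h
  · exact absurd (hxy ▸ hy) (onX_not_smul hx ht.le h)
  · simp [hxy, h]
  · have hx' : x = t⁻¹ • y := by rw [hxy, smul_smul, inv_mul_cancel₀ ht.ne', one_smul]
    have : t⁻¹ < 1 := by rw [inv_lt_one_iff₀]; right; exact h
    exact absurd (hx' ▸ hx) (onX_not_smul hy (by positivity) this)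


theorem exists_phase {z w : ℂ} (h : ‖z‖ = ‖w‖) :
    ∃ θ : ℝ, w = Complex.exp (θ * Complex.I) * z := by
  rcases eq_or_ne z 0 with rfl | hz
  · refine ⟨0, ?_⟩
    simp at h ⊢
    exact norm_eq_zero.mp (by simpa using h.symm)
  · refine ⟨w.arg - z.arg, ?_⟩
    have hz' := Complex.norm_mul_exp_arg_mul_I z
    have hw' := Complex.norm_mul_exp_arg_mul_I w
    have key : Complex.exp (((w.arg - z.arg : ℝ) : ℂ) * Complex.I) * Complex.exp (z.arg * Complex.I)
        = Complex.exp (w.arg * Complex.I) := by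
      rw [← Complex.exp_add]; congr 1; push_cast; ring
    calc w = (‖w‖ : ℂ) * Complex.exp (w.arg * Complex.I) := hw'.symm
    _ = (‖z‖ : ℂ) * Complex.exp (w.arg * Complex.I) := by rw [h]
    _ = (‖z‖ : ℂ) * (Complex.exp (((w.arg - z.arg : ℝ) : ℂ) * Complex.I) * Complex.exp (z.arg * Complex.I)) := by rw [key]
    _ = Complex.exp (((w.arg - z.arg : ℝ) : ℂ) * Complex.I) * ((‖z‖ : ℂ) * Complex.exp (z.arg * Complex.I)) := by ring
    _ = Complex.exp (((w.arg - z.arg : ℝ) : ℂ) * Complex.I) * z := by rw [hz']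

theorem orbit_of_invariants {z w : ℂ × ℂ × ℂ}
    (h1 : ‖z.1‖ = ‖w.1‖)
    (h2 : ‖z.2.1‖ = ‖w.2.1‖)
    (h3 : ‖z.2.2‖ = ‖w.2.2‖)
    (hp : z.1 * z.2.1 * z.2.2 = w.1 * w.2.1 * w.2.2) :
    ∃ θ φ : ℝ, w = torusAct θ φ z := by
  obtain ⟨θ₁, e1⟩ := exists_phase h1
  obtain ⟨θ₂, e2⟩ := exists_phase h2
  obtain ⟨θ₃, e3⟩ := exists_phase h3
  by_cases hz1 : z.1 = 0
  · have hw1 : w.1 = 0 := by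
      have := h1; rw [hz1] at this; simp at this
      exact norm_eq_zero.mp (by simpa using this.symm)
    refine ⟨-θ₃ - θ₂, θ₂, ?_⟩
    refine Prod.ext ?_ (Prod.ext ?_ ?_)
    · simp [torusAct, hz1, hw1]
    · simpa [torusAct] using e2
    · show w.2.2 = Complex.exp (-(((-θ₃ - θ₂ : ℝ) : ℂ) + ((θ₂ : ℝ) : ℂ)) * Complex.I) * z.2.2
      convert e3 using 3
      push_cast; ring
  · by_cases hz2 : z.2.1 = 0
    · have hw2 : w.2.1 = 0 := by
        have := h2; rw [hz2] at this; simp at this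
        exact norm_eq_zero.mp (by simpa using this.symm)
      refine ⟨θ₁, -θ₃ - θ₁, ?_⟩
      refine Prod.ext ?_ (Prod.ext ?_ ?_)
      · simpa [torusAct] using e1
      · simp [torusAct, hz2, hw2]
      · show w.2.2 = Complex.exp (-(((θ₁ : ℝ) : ℂ) + ((-θ₃ - θ₁ : ℝ) : ℂ)) * Complex.I) * z.2.2
        convert e3 using 3
        push_cast; ring
    · refine ⟨θ₁, θ₂, ?_⟩
      refine Prod.ext ?_ (Prod.ext ?_ ?_)
      · simpa [torusAct] using e1
      · simpa [torusAct] using e2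
      · show w.2.2 = Complex.exp (-(((θ₁ : ℝ) : ℂ) + ((θ₂ : ℝ) : ℂ)) * Complex.I) * z.2.2
        rw [e1, e2] at hp
        have hne : Complex.exp (θ₁ * Complex.I) * z.1 * (Complex.exp (θ₂ * Complex.I) * z.2.1) ≠ 0 :=
          mul_ne_zero (mul_ne_zero (Complex.exp_ne_zero _) hz1)
            (mul_ne_zero (Complex.exp_ne_zero _) hz2)
        have hexp : Complex.exp (θ₁ * Complex.I) * Complex.exp (θ₂ * Complex.I) *
            Complex.exp (-(((θ₁ : ℝ) : ℂ) + ((θ₂ : ℝ) : ℂ)) * Complex.I) = 1 := by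
          rw [← Complex.exp_add, ← Complex.exp_add, ← Complex.exp_zero]
          congr 1; push_cast; ring
        have hp' : Complex.exp (θ₁ * Complex.I) * z.1 * (Complex.exp (θ₂ * Complex.I) * z.2.1) *
            (Complex.exp (-(((θ₁ : ℝ) : ℂ) + ((θ₂ : ℝ) : ℂ)) * Complex.I) * z.2.2) =
            Complex.exp (θ₁ * Complex.I) * z.1 * (Complex.exp (θ₂ * Complex.I) * z.2.1) * w.2.2 := by
          rw [← hp]
          linear_combination (z.1 * z.2.1 * z.2.2) * hexp
        exact (mul_left_cancel₀ hne hp').symm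


-- abs invariance of each coordinate
theorem torusAct_abs1 (θ φ : ℝ) (z : ℂ × ℂ × ℂ) :
    ‖(torusAct θ φ z).1‖ = ‖z.1‖ := by
  simp [torusAct, Complex.norm_exp]
theorem torusAct_abs2 (θ φ : ℝ) (z : ℂ × ℂ × ℂ) :
    ‖(torusAct θ φ z).2.1‖ = ‖z.2.1‖ := by
  simp [torusAct, Complex.norm_exp]
theorem torusAct_abs3 (θ φ : ℝ) (z : ℂ × ℂ × ℂ) :
    ‖(torusAct θ φ z).2.2‖ = ‖z.2.2‖ := by
  simp [torusAct, Complex.norm_exp]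

theorem torusAct_prod (θ φ : ℝ) (z : ℂ × ℂ × ℂ) :
    (torusAct θ φ z).1 * (torusAct θ φ z).2.1 * (torusAct θ φ z).2.2
      = z.1 * z.2.1 * z.2.2 := by
  show Complex.exp (θ * Complex.I) * z.1 * (Complex.exp (φ * Complex.I) * z.2.1) *
    (Complex.exp (-(((θ : ℝ) : ℂ) + ((φ : ℝ) : ℂ)) * Complex.I) * z.2.2) = _
  have hexp : Complex.exp (θ * Complex.I) * Complex.exp (φ * Complex.I) *
      Complex.exp (-(((θ : ℝ) : ℂ) + ((φ : ℝ) : ℂ)) * Complex.I) = 1 := by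
    rw [← Complex.exp_add, ← Complex.exp_add, ← Complex.exp_zero]
    congr 1; ring
  linear_combination (z.1 * z.2.1 * z.2.2) * hexp

theorem invMap_invariant (θ φ : ℝ) (z : ℂ × ℂ × ℂ) :
    invMap (torusAct θ φ z) = invMap z := by
  ext i
  fin_cases i
  · show ‖(torusAct θ φ z).1‖ ^ 2 - 1/3 = _
    rw [torusAct_abs1]; rfl
  · show ‖(torusAct θ φ z).2.1‖ ^ 2 - 1/3 = _
    rw [torusAct_abs2]; rfl
  · show ((torusAct θ φ z).1 * (torusAct θ φ z).2.1 * (torusAct θ φ z).2.2).re = _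
    rw [torusAct_prod]; rfl
  · show ((torusAct θ φ z).1 * (torusAct θ φ z).2.1 * (torusAct θ φ z).2.2).im = _
    rw [torusAct_prod]; rfl

theorem onX_invMap {z : ℂ × ℂ × ℂ} (hz : z ∈ sphere5) : onX (invMap z) := by
  have hz' : ‖z.1‖ ^ 2 + ‖z.2.1‖ ^ 2 + ‖z.2.2‖ ^ 2 = 1 := hz
  have e0 : invMap z 0 = ‖z.1‖ ^ 2 - 1/3 := rfl
  have e1 : invMap z 1 = ‖z.2.1‖ ^ 2 - 1/3 := rfl
  have e2 : invMap z 2 = (z.1 * z.2.1 * z.2.2).re := rfl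
  have e3 : invMap z 3 = (z.1 * z.2.1 * z.2.2).im := rfl
  refine ⟨?_, ?_, ?_, ?_⟩
  · rw [e0]; nlinarith [sq_nonneg (‖z.1‖)]
  · rw [e1]; nlinarith [sq_nonneg (‖z.2.1‖)]
  · rw [e0, e1]
    nlinarith [sq_nonneg (‖z.2.2‖)]
  · rw [e0, e1, e2, e3]
    have habs : (z.1 * z.2.1 * z.2.2).re ^ 2 + (z.1 * z.2.1 * z.2.2).im ^ 2
        = ‖(z.1 * z.2.1 * z.2.2)‖ ^ 2 := by
      rw [Complex.sq_norm, Complex.normSq_apply]; ring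
    rw [habs, norm_mul, norm_mul]
    have : ‖z.2.2‖ ^ 2 = 1/3 - (‖z.1‖ ^ 2 - 1/3) - (‖z.2.1‖ ^2 - 1/3) := by
      linarith
    rw [← this]
    ring

theorem onX_ne_zero {x : EuclideanSpace ℝ (Fin 4)} (hx : onX x) : x ≠ 0 := by
  rintro rfl
  obtain ⟨-, -, -, h4⟩ := hx
  norm_num at h4


theorem invMap_eq_iff (z : ℂ × ℂ × ℂ) (x : EuclideanSpace ℝ (Fin 4)) :
    invMap z = x ↔ (‖z.1‖ ^ 2 - 1/3 = x 0 ∧ ‖z.2.1‖ ^ 2 - 1/3 = x 1 ∧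
      (z.1 * z.2.1 * z.2.2).re = x 2 ∧ (z.1 * z.2.1 * z.2.2).im = x 3) := by
  constructor
  · rintro rfl; exact ⟨rfl, rfl, rfl, rfl⟩
  · rintro ⟨a, b, c, d⟩
    ext i
    fin_cases i
    · exact a
    · exact b
    · exact c
    · exact d


theorem sq_add_sq_eq_zero {u v : ℝ} (h : u ^ 2 + v ^ 2 = 0) : u = 0 ∧ v = 0 := by
  constructor
  · have hu : u ^ 2 = 0 := le_antisymm (by nlinarith [sq_nonneg v]) (sq_nonneg u)
    exact (pow_eq_zero_iff two_ne_zero).mp hu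
  · have hv : v ^ 2 = 0 := le_antisymm (by nlinarith [sq_nonneg u]) (sq_nonneg v)
    exact (pow_eq_zero_iff two_ne_zero).mp hv

theorem exists_lift {x : EuclideanSpace ℝ (Fin 4)} (hx : onX x) :
    ∃ z ∈ sphere5, invMap z = x := by
  obtain ⟨h1, h2, h3, h4⟩ := hx
  rcases eq_or_lt_of_le h1 with hA | hA
  · -- x 0 + 1/3 = 0
    have hzero : x 2 = 0 ∧ x 3 = 0 := by
      apply sq_add_sq_eq_zero
      rw [h4, ← hA]; ring
    refine ⟨(0, (Real.sqrt (x 1 + 1/3) : ℂ), (Real.sqrt (1/3 - x 0 - x 1) : ℂ)), ?_, ?_⟩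
    · show ‖0‖ ^ 2 + ‖(Real.sqrt (x 1 + 1/3) : ℂ)‖ ^ 2 +
        ‖(Real.sqrt (1/3 - x 0 - x 1) : ℂ)‖ ^ 2 = 1
      rw [Complex.norm_real, Real.norm_eq_abs, Complex.norm_real, Real.norm_eq_abs, sq_abs, sq_abs,
        Real.sq_sqrt h2, Real.sq_sqrt h3]
      simp only [norm_zero]
      nlinarith [hA]
    · rw [invMap_eq_iff]
      refine ⟨?_, ?_, ?_, ?_⟩
      · simp only [norm_zero]; linarith [hA]
      · rw [Complex.norm_real, Real.norm_eq_abs, sq_abs, Real.sq_sqrt h2]; ring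
      · simp [hzero.1]
      · simp [hzero.2]
  · rcases eq_or_lt_of_le h2 with hB | hB
    · have hzero : x 2 = 0 ∧ x 3 = 0 := by
        apply sq_add_sq_eq_zero
        rw [h4, ← hB]; ring
      refine ⟨((Real.sqrt (x 0 + 1/3) : ℂ), 0, (Real.sqrt (1/3 - x 0 - x 1) : ℂ)), ?_, ?_⟩
      · show ‖(Real.sqrt (x 0 + 1/3) : ℂ)‖ ^ 2 + ‖0‖ ^ 2 +
          ‖(Real.sqrt (1/3 - x 0 - x 1) : ℂ)‖ ^ 2 = 1
        rw [Complex.norm_real, Real.norm_eq_abs, Complex.norm_real, Real.norm_eq_abs, sq_abs, sq_abs,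
          Real.sq_sqrt hA.le, Real.sq_sqrt h3]
        simp only [norm_zero]
        nlinarith [hB]
      · rw [invMap_eq_iff]
        refine ⟨?_, ?_, ?_, ?_⟩
        · rw [Complex.norm_real, Real.norm_eq_abs, sq_abs, Real.sq_sqrt hA.le]; ring
        · simp only [norm_zero]; linarith [hB]
        · simp [hzero.1]
        · simp [hzero.2]
    · -- both positive
      have hd : ((Real.sqrt (x 0 + 1/3) : ℂ) * (Real.sqrt (x 1 + 1/3) : ℂ)) ≠ 0 := by
        apply mul_ne_zero <;>
        · simp only [ne_eq, Complex.ofReal_eq_zero]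
          positivity
      set p : ℂ := ⟨x 2, x 3⟩ with hp
      have hprod : (Real.sqrt (x 0 + 1/3) : ℂ) * (Real.sqrt (x 1 + 1/3) : ℂ) *
          (p / ((Real.sqrt (x 0 + 1/3) : ℂ) * (Real.sqrt (x 1 + 1/3) : ℂ))) = p := by
        rw [← mul_div_assoc, mul_comm, mul_div_assoc, div_self hd, mul_one]
      have hpabs : ‖p‖ ^ 2 = x 2 ^ 2 + x 3 ^ 2 := by
        rw [Complex.sq_norm, Complex.normSq_apply]; simp only [hp]; ring
      refine ⟨((Real.sqrt (x 0 + 1/3) : ℂ), (Real.sqrt (x 1 + 1/3) : ℂ),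
        p / ((Real.sqrt (x 0 + 1/3) : ℂ) * (Real.sqrt (x 1 + 1/3) : ℂ))), ?_, ?_⟩
      · show ‖(Real.sqrt (x 0 + 1/3) : ℂ)‖ ^ 2 + ‖(Real.sqrt (x 1 + 1/3) : ℂ)‖ ^ 2 +
          ‖(p / ((Real.sqrt (x 0 + 1/3) : ℂ) * (Real.sqrt (x 1 + 1/3) : ℂ)))‖ ^ 2 = 1
        rw [norm_div, norm_mul, Complex.norm_real, Real.norm_eq_abs, Complex.norm_real, Real.norm_eq_abs, div_pow, mul_pow,
          sq_abs, sq_abs, Real.sq_sqrt hA.le, Real.sq_sqrt hB.le, hpabs, h4]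
        have hab : (x 0 + 1/3) * (x 1 + 1/3) ≠ 0 := mul_ne_zero (ne_of_gt hA) (ne_of_gt hB)
        rw [show (x 0 + 1/3) * ((x 1 + 1/3) * (1/3 - x 0 - x 1)) = ((x 0 + 1/3) * (x 1 + 1/3)) * (1/3 - x 0 - x 1) by ring,
          mul_div_cancel_left₀ _ hab]
        ring
      · rw [invMap_eq_iff]
        refine ⟨?_, ?_, ?_, ?_⟩
        · rw [Complex.norm_real, Real.norm_eq_abs, sq_abs, Real.sq_sqrt hA.le]; ring
        · rw [Complex.norm_real, Real.norm_eq_abs, sq_abs, Real.sq_sqrt hB.le]; ring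
        · rw [hprod]
        · rw [hprod]


theorem norm_sq_sum (v : EuclideanSpace ℝ (Fin 4)) (hv : ‖v‖ = 1) :
    v 0 ^ 2 + v 1 ^ 2 + v 2 ^ 2 + v 3 ^ 2 = 1 := by
  have h := EuclideanSpace.norm_eq v
  rw [hv] at h
  have h2 : (1:ℝ) = Real.sqrt (∑ i, ‖v i‖ ^ 2) := h
  have h3 : ∑ i, ‖v i‖ ^ 2 = 1 := by
    have hnn : 0 ≤ ∑ i, ‖v i‖ ^ 2 := by positivity
    nlinarith [Real.sq_sqrt hnn, h2]
  rw [Fin.sum_univ_four] at h3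
  simpa [sq_abs, Real.norm_eq_abs] using h3

set_option maxHeartbeats 1000000 in
theorem exists_onX_ray (v : EuclideanSpace ℝ (Fin 4)) (hv : ‖v‖ = 1) :
    ∃ T : ℝ, 0 < T ∧ onX (T • v) := by
  have hsum := norm_sq_sum v hv
  have hv0 : v 0 ^ 2 ≤ 1 := by nlinarith [sq_nonneg (v 1), sq_nonneg (v 2), sq_nonneg (v 3)]
  have hv1 : v 1 ^ 2 ≤ 1 := by nlinarith [sq_nonneg (v 0), sq_nonneg (v 2), sq_nonneg (v 3)]
  have hv23 : v 2 ^ 2 + v 3 ^ 2 ≤ 1 := by nlinarith [sq_nonneg (v 0), sq_nonneg (v 1)]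
  set S : Set ℝ := {t | 0 ≤ t ∧ 0 ≤ t * v 0 + 1/3 ∧ 0 ≤ t * v 1 + 1/3 ∧
    0 ≤ 1/3 - t * v 0 - t * v 1 ∧
    (t * v 2)^2 + (t * v 3)^2 ≤ (t * v 0 + 1/3) * ((t * v 1 + 1/3) * (1/3 - t * v 0 - t * v 1))}
    with hSdef
  have hclosed : IsClosed S := by
    rw [hSdef]
    simp only [Set.setOf_and]
    refine IsClosed.inter ?_ (IsClosed.inter ?_ (IsClosed.inter ?_ (IsClosed.inter ?_ ?_)))
    · exact isClosed_le continuous_const continuous_id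
    · exact isClosed_le continuous_const (by fun_prop)
    · exact isClosed_le continuous_const (by fun_prop)
    · exact isClosed_le continuous_const (by fun_prop)
    · exact isClosed_le (by fun_prop) (by fun_prop)
  have hsub : S ⊆ Set.Icc 0 2 := by
    rintro t ⟨ht0, h1, h2, h3, h4⟩
    refine ⟨ht0, ?_⟩
    have b0 : (t * v 0)^2 ≤ 1 := by nlinarith
    have b1 : (t * v 1)^2 ≤ 1 := by nlinarith
    have hfacta : t * v 0 + 1/3 ≤ 1 := by linarith
    have hfactb : t * v 1 + 1/3 ≤ 1 := by linarith
    have hfactc : 1/3 - t * v 0 - t * v 1 ≤ 1 := by linarith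
    have b23 : (t * v 2)^2 + (t * v 3)^2 ≤ 1 := by nlinarith
    nlinarith [sq_nonneg t, sq_nonneg (t*v 2), sq_nonneg (t*v 3)]
  have hcpt : IsCompact S := (isCompact_Icc : IsCompact (Set.Icc (0:ℝ) 2)).of_isClosed_subset hclosed hsub
  have hmem : (1/12 : ℝ) ∈ S := by
    rw [hSdef]; simp only [Set.mem_setOf_eq]
    have e0 : -1 ≤ v 0 ∧ v 0 ≤ 1 := ⟨by nlinarith, by nlinarith⟩
    have e1 : -1 ≤ v 1 ∧ v 1 ≤ 1 := ⟨by nlinarith, by nlinarith⟩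
    refine ⟨by norm_num, by nlinarith [e0.1], by nlinarith [e1.1], by nlinarith [e0.2, e1.2], ?_⟩
    have hA : (1/4:ℝ) ≤ 1/12 * v 0 + 1/3 := by nlinarith [e0.1]
    have hB : (1/4:ℝ) ≤ 1/12 * v 1 + 1/3 := by nlinarith [e1.1]
    have hC : (1/6:ℝ) ≤ 1/3 - 1/12 * v 0 - 1/12 * v 1 := by nlinarith [e0.2, e1.2]
    have hBC : (1/24:ℝ) ≤ (1/12 * v 1 + 1/3) * (1/3 - 1/12 * v 0 - 1/12 * v 1) := by nlinarith
    have hABC : (1/96:ℝ) ≤ (1/12 * v 0 + 1/3) * ((1/12 * v 1 + 1/3) * (1/3 - 1/12 * v 0 - 1/12 * v 1)) := by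
      nlinarith
    nlinarith [sq_nonneg (v 2), sq_nonneg (v 3), hv23]
  obtain ⟨T, hTS, hTub⟩ := hcpt.exists_isGreatest ⟨1/12, hmem⟩
  rw [hSdef] at hTS; simp only [Set.mem_setOf_eq] at hTS
  obtain ⟨hT0, g1, g2, g3, g4⟩ := hTS
  have hTpos : (0:ℝ) < T := lt_of_lt_of_le (by norm_num) (hTub hmem)
  -- show equality at T
  have heq : (T * v 2)^2 + (T * v 3)^2
      = (T * v 0 + 1/3) * ((T * v 1 + 1/3) * (1/3 - T * v 0 - T * v 1)) := by
    by_contra hne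
    have hlt : (T * v 2)^2 + (T * v 3)^2
        < (T * v 0 + 1/3) * ((T * v 1 + 1/3) * (1/3 - T * v 0 - T * v 1)) := lt_of_le_of_ne g4 hne
    have ha : 0 < T * v 0 + 1/3 := by
      rcases eq_or_lt_of_le g1 with h | h
      · exfalso; rw [← h] at hlt; nlinarith [sq_nonneg (T * v 2), sq_nonneg (T * v 3)]
      · exact h
    have hb : 0 < T * v 1 + 1/3 := by
      rcases eq_or_lt_of_le g2 with h | h
      · exfalso; rw [← h] at hlt; nlinarith [sq_nonneg (T * v 2), sq_nonneg (T * v 3)]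
      · exact h
    have hc : 0 < 1/3 - T * v 0 - T * v 1 := by
      rcases eq_or_lt_of_le g3 with h | h
      · exfalso; rw [← h] at hlt; nlinarith [sq_nonneg (T * v 2), sq_nonneg (T * v 3)]
      · exact h
    -- open condition
    set U : Set ℝ := {t | 0 < t * v 0 + 1/3 ∧ 0 < t * v 1 + 1/3 ∧ 0 < 1/3 - t * v 0 - t * v 1 ∧
      (t * v 2)^2 + (t * v 3)^2 < (t * v 0 + 1/3) * ((t * v 1 + 1/3) * (1/3 - t * v 0 - t * v 1))}
      with hUdef
    have hUopen : IsOpen U := by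
      rw [hUdef]
      simp only [Set.setOf_and]
      refine IsOpen.inter ?_ (IsOpen.inter ?_ (IsOpen.inter ?_ ?_))
      · exact isOpen_lt continuous_const (by fun_prop)
      · exact isOpen_lt continuous_const (by fun_prop)
      · exact isOpen_lt continuous_const (by fun_prop)
      · exact isOpen_lt (by fun_prop) (by fun_prop)
    have hTU : T ∈ U := by rw [hUdef]; simp only [Set.mem_setOf_eq]; exact ⟨ha, hb, hc, hlt⟩
    obtain ⟨ε, hε, hball⟩ := Metric.isOpen_iff.mp hUopen T hTU
    have hmem' : T + ε/2 ∈ U := by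
      apply hball
      rw [Metric.mem_ball, Real.dist_eq]
      rw [abs_of_pos (by linarith)]
      · linarith
    rw [hUdef] at hmem'; simp only [Set.mem_setOf_eq] at hmem'
    obtain ⟨k1, k2, k3, k4⟩ := hmem'
    have : T + ε/2 ∈ S := by
      rw [hSdef]; simp only [Set.mem_setOf_eq]
      exact ⟨by linarith, k1.le, k2.le, k3.le, k4.le⟩
    have := hTub this
    linarith
  refine ⟨T, hTpos, ?_, ?_, ?_, ?_⟩
  · show 0 ≤ T * v 0 + 1/3; exact g1
  · show 0 ≤ T * v 1 + 1/3; exact g2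
  · show 0 ≤ 1/3 - T * v 0 - T * v 1; exact g3
  · exact heq

theorem abs_eq_of_sq_eq {u v : ℝ} (hu : 0 ≤ u) (hv : 0 ≤ v) (h : u ^ 2 = v ^ 2) : u = v := by
  nlinarith

theorem sphere5_isCompact : IsCompact sphere5 := by
  have hclosed : IsClosed sphere5 := by
    have : sphere5 = (fun z : ℂ × ℂ × ℂ =>
        ‖z.1‖ ^ 2 + ‖z.2.1‖ ^ 2 + ‖z.2.2‖ ^ 2) ⁻¹' {1} := rfl
    rw [this]
    apply IsClosed.preimage _ isClosed_singleton
    have c1 : Continuous fun z : ℂ × ℂ × ℂ => z.1 := continuous_fst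
    have c2 : Continuous fun z : ℂ × ℂ × ℂ => z.2.1 := continuous_fst.comp continuous_snd
    have c3 : Continuous fun z : ℂ × ℂ × ℂ => z.2.2 := continuous_snd.comp continuous_snd
    exact (((continuous_norm.comp c1).pow 2).add
      ((continuous_norm.comp c2).pow 2)).add ((continuous_norm.comp c3).pow 2)
  have hbdd : sphere5 ⊆ Metric.closedBall 0 1 := by
    intro z hz
    have hz' : ‖z.1‖ ^ 2 + ‖z.2.1‖ ^ 2 + ‖z.2.2‖ ^ 2 = 1 := hz
    rw [Metric.mem_closedBall, dist_zero_right]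
    have h1 : ‖z.1‖ ≤ 1 := by
      have := norm_nonneg z.1
      have := norm_nonneg z.2.1
      have := norm_nonneg z.2.2
      show ‖z.1‖ ≤ 1
      nlinarith
    have h2 : ‖z.2.1‖ ≤ 1 := by
      have := norm_nonneg z.1
      have := norm_nonneg z.2.1
      have := norm_nonneg z.2.2
      show ‖z.2.1‖ ≤ 1
      nlinarith
    have h3 : ‖z.2.2‖ ≤ 1 := by
      have := norm_nonneg z.1
      have := norm_nonneg z.2.1
      have := norm_nonneg z.2.2
      show ‖z.2.2‖ ≤ 1
      nlinarith
    calc ‖z‖ = max ‖z.1‖ (max ‖z.2.1‖ ‖z.2.2‖) := by rw [Prod.norm_def, Prod.norm_def]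
    _ ≤ 1 := by
      apply max_le h1 (max_le h2 h3)
  exact (isCompact_closedBall (0 : ℂ × ℂ × ℂ) 1).of_isClosed_subset hclosed hbdd

theorem invMap_ne_zero {z : ℂ × ℂ × ℂ} (hz : z ∈ sphere5) : invMap z ≠ 0 :=
  onX_ne_zero (onX_invMap hz)

noncomputable def Fmap (z : sphere5) : Metric.sphere (0 : EuclideanSpace ℝ (Fin 4)) 1 :=
  ⟨‖invMap z.val‖⁻¹ • invMap z.val, by
    rw [mem_sphere_zero_iff_norm, norm_smul, norm_inv, norm_norm,
      inv_mul_cancel₀ (norm_ne_zero_iff.mpr (invMap_ne_zero z.2))]⟩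

theorem Fmap_continuous : Continuous Fmap := by
  apply Continuous.subtype_mk
  have h : Continuous fun z : sphere5 => invMap z.val :=
    invMap_continuous.comp continuous_subtype_val
  exact (h.norm.inv₀ fun z => norm_ne_zero_iff.mpr (invMap_ne_zero z.2)).smul h

theorem Fmap_respects (z w : sphere5) (h : sphere5Setoid.r z w) : Fmap z = Fmap w := by
  obtain ⟨θ, φ, hw⟩ := h
  have : invMap w.val = invMap z.val := by rw [hw, invMap_invariant]
  apply Subtype.ext
  show ‖invMap z.val‖⁻¹ • invMap z.val = ‖invMap w.val‖⁻¹ • invMap w.val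
  rw [this]

theorem Fmap_inj_rel (z w : sphere5) (h : Fmap z = Fmap w) : sphere5Setoid.r z w := by
  have hx := onX_invMap z.2
  have hy := onX_invMap w.2
  have hxne : ‖invMap z.val‖ ≠ 0 := norm_ne_zero_iff.mpr (invMap_ne_zero z.2)
  have hyne : ‖invMap w.val‖ ≠ 0 := norm_ne_zero_iff.mpr (invMap_ne_zero w.2)
  have heq : ‖invMap z.val‖⁻¹ • invMap z.val = ‖invMap w.val‖⁻¹ • invMap w.val :=
    congrArg Subtype.val h
  have hscale : invMap w.val = (‖invMap w.val‖ * ‖invMap z.val‖⁻¹) • invMap z.val := by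
    calc invMap w.val = ‖invMap w.val‖ • (‖invMap w.val‖⁻¹ • invMap w.val) := by
          rw [smul_smul, mul_inv_cancel₀ hyne, one_smul]
    _ = ‖invMap w.val‖ • (‖invMap z.val‖⁻¹ • invMap z.val) := by rw [heq]
    _ = (‖invMap w.val‖ * ‖invMap z.val‖⁻¹) • invMap z.val := by rw [smul_smul]
  have ht : 0 < ‖invMap w.val‖ * ‖invMap z.val‖⁻¹ := by
    apply mul_pos ((norm_nonneg _).lt_of_ne (Ne.symm hyne))
    exact inv_pos.mpr ((norm_nonneg _).lt_of_ne (Ne.symm hxne))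
  have hinv : invMap w.val = invMap z.val := onX_scale_eq hx hy ht hscale
  -- extract invariants
  have e0 : ‖w.val.1‖ ^ 2 - 1/3 = ‖z.val.1‖ ^ 2 - 1/3 := congrArg (fun v : EuclideanSpace ℝ (Fin 4) => v 0) hinv
  have e1 : ‖w.val.2.1‖ ^ 2 - 1/3 = ‖z.val.2.1‖ ^ 2 - 1/3 := congrArg (fun v : EuclideanSpace ℝ (Fin 4) => v 1) hinv
  have e2 : (w.val.1 * w.val.2.1 * w.val.2.2).re = (z.val.1 * z.val.2.1 * z.val.2.2).re :=
    congrArg (fun v : EuclideanSpace ℝ (Fin 4) => v 2) hinv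
  have e3 : (w.val.1 * w.val.2.1 * w.val.2.2).im = (z.val.1 * z.val.2.1 * z.val.2.2).im :=
    congrArg (fun v : EuclideanSpace ℝ (Fin 4) => v 3) hinv
  have hz5 : ‖z.val.1‖ ^ 2 + ‖z.val.2.1‖ ^ 2 + ‖z.val.2.2‖ ^ 2 = 1 := z.2
  have hw5 : ‖w.val.1‖ ^ 2 + ‖w.val.2.1‖ ^ 2 + ‖w.val.2.2‖ ^ 2 = 1 := w.2
  have h1 : ‖z.val.1‖ = ‖w.val.1‖ :=
    abs_eq_of_sq_eq (norm_nonneg _) (norm_nonneg _) (by linarith)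
  have h2 : ‖z.val.2.1‖ = ‖w.val.2.1‖ :=
    abs_eq_of_sq_eq (norm_nonneg _) (norm_nonneg _) (by linarith)
  have h3 : ‖z.val.2.2‖ = ‖w.val.2.2‖ :=
    abs_eq_of_sq_eq (norm_nonneg _) (norm_nonneg _) (by nlinarith)
  have hp : z.val.1 * z.val.2.1 * z.val.2.2 = w.val.1 * w.val.2.1 * w.val.2.2 :=
    Complex.ext e2.symm e3.symm
  exact orbit_of_invariants h1 h2 h3 hp

theorem Fmap_surjective : Function.Surjective Fmap := by
  rintro ⟨v, hv⟩
  have hvnorm : ‖v‖ = 1 := by rwa [mem_sphere_zero_iff_norm] at hv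
  obtain ⟨T, hT, hX⟩ := exists_onX_ray v hvnorm
  obtain ⟨z, hz5, hinv⟩ := exists_lift hX
  refine ⟨⟨z, hz5⟩, ?_⟩
  apply Subtype.ext
  show ‖invMap z‖⁻¹ • invMap z = v
  rw [hinv, norm_smul, Real.norm_eq_abs, abs_of_pos hT, hvnorm, mul_one, smul_smul,
    inv_mul_cancel₀ (ne_of_gt hT), one_smul]

theorem sphere5_quotient_homeomorph_S3' :
    Nonempty (Quotient sphere5Setoid ≃ₜ
      Metric.sphere (0 : EuclideanSpace ℝ (Fin 4)) 1) := by
  have hcs : CompactSpace sphere5 := isCompact_iff_compactSpace.mp sphere5_isCompact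
  let G : Quotient sphere5Setoid → Metric.sphere (0 : EuclideanSpace ℝ (Fin 4)) 1 :=
    Quotient.lift Fmap Fmap_respects
  have hGcont : Continuous G := Fmap_continuous.quotient_lift Fmap_respects
  have hGinj : Function.Injective G := by
    intro a b
    induction a using Quotient.ind
    induction b using Quotient.ind
    intro h
    exact Quotient.sound (Fmap_inj_rel _ _ h)
  have hGsurj : Function.Surjective G := by
    intro v
    obtain ⟨z, hz⟩ := Fmap_surjective v
    exact ⟨Quotient.mk _ z, hz⟩
  exact ⟨Continuous.homeoOfEquivCompactToT2 (f := Equiv.ofBijective G ⟨hGinj, hGsurj⟩) hGcont⟩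

/-- The orbit space `S⁵/T²` is homeomorphic to the 3-sphere `S³`. -/
theorem sphere5_quotient_homeomorph_S3 :
    Nonempty (Quotient sphere5Setoid ≃ₜ
      Metric.sphere (0 : EuclideanSpace ℝ (Fin 4)) 1) := by
  exact sphere5_quotient_homeomorph_S3'
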